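/- Fix a function f: {0,1}^n → {0,1} and let k = a(f) be its alternation complexity. Then for every x ∈ {0,1}^n: if f(0^n) = 0 then f(x) = PAR_k(1[T_0^f](x), ..., 1[T_{k−1}^f](x)), and if f(0^n) = 1 then f(x) = 1 ⊕ PAR_k(1[T_0^f](x), ..., 1[T_{k−1}^f](x)). Equivalently, f(x) = f(0^n) ⊕ ⨁_{ℓ=0}^{k−1} 1[a_f(x) ≤ ℓ] for all x. -/

import Mathlib

/-- Number of alternations of `f` along the chain `X` of `ℓ+1` points:
the number of indices `j` with `f (X j) ≠ f (X (j+1))`. -/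
def altCount {n : ℕ} (f : (Fin n → Bool) → Bool) {ℓ : ℕ}
    (X : Fin (ℓ + 1) → (Fin n → Bool)) : ℕ :=
  (Finset.univ.filter (fun j : Fin ℓ => f (X j.castSucc) ≠ f (X j.succ))).card

/-- `a_f(x)`: the maximum number of alternations of `f` over all
(strictly increasing) chains in `{0,1}^n` starting at `x`. -/
noncomputable def altFrom {n : ℕ} (f : (Fin n → Bool) → Bool) (x : Fin n → Bool) : ℕ :=
  sSup {k | ∃ (ℓ : ℕ) (X : Fin (ℓ + 1) → (Fin n → Bool)),
    StrictMono X ∧ X 0 = x ∧ altCount f X = k}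

/-- `a(f)`: the maximum number of alternations of `f` over all
(strictly increasing) chains in `{0,1}^n`. -/
noncomputable def alt {n : ℕ} (f : (Fin n → Bool) → Bool) : ℕ :=
  sSup {k | ∃ (ℓ : ℕ) (X : Fin (ℓ + 1) → (Fin n → Bool)),
    StrictMono X ∧ altCount f X = k}

section Aux

variable {n : ℕ} (f : (Fin n → Bool) → Bool)

lemma altCount_eq_sum {ℓ : ℕ} (X : Fin (ℓ + 1) → (Fin n → Bool)) :
    altCount f X = ∑ j : Fin ℓ, (if f (X j.castSucc) = f (X j.succ) then 0 else 1) := by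
  unfold altCount
  rw [Finset.card_filter]
  apply Finset.sum_congr rfl
  intro j _
  by_cases h : f (X j.castSucc) = f (X j.succ) <;> simp [h]

lemma altCount_le_bound {ℓ : ℕ} (X : Fin (ℓ + 1) → (Fin n → Bool)) (hX : StrictMono X) :
    altCount f X ≤ 2 ^ n := by
  have h1 : altCount f X ≤ ℓ := by
    have := Finset.card_filter_le (Finset.univ : Finset (Fin ℓ))
      (fun j : Fin ℓ => f (X j.castSucc) ≠ f (X j.succ))
    simpa [altCount] using this
  have h2 : ℓ + 1 ≤ 2 ^ n := by
    have := Fintype.card_le_of_injective X hX.injective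
    simpa using this
  omega

lemma bddAbove_from (x : Fin n → Bool) :
    BddAbove {k | ∃ (ℓ : ℕ) (X : Fin (ℓ + 1) → (Fin n → Bool)),
      StrictMono X ∧ X 0 = x ∧ altCount f X = k} := by
  refine ⟨2 ^ n, ?_⟩
  rintro m ⟨ℓ, X, hX, -, rfl⟩
  exact altCount_le_bound f X hX

lemma bddAbove_alt :
    BddAbove {k | ∃ (ℓ : ℕ) (X : Fin (ℓ + 1) → (Fin n → Bool)),
      StrictMono X ∧ altCount f X = k} := by
  refine ⟨2 ^ n, ?_⟩
  rintro m ⟨ℓ, X, hX, rfl⟩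
  exact altCount_le_bound f X hX

lemma nonempty_from (x : Fin n → Bool) :
    Set.Nonempty {k | ∃ (ℓ : ℕ) (X : Fin (ℓ + 1) → (Fin n → Bool)),
      StrictMono X ∧ X 0 = x ∧ altCount f X = k} := by
  refine ⟨0, 0, fun _ => x, ?_, rfl, by simp [altCount]⟩
  intro a b h
  exact absurd h (by omega)

lemma nonempty_alt :
    Set.Nonempty {k | ∃ (ℓ : ℕ) (X : Fin (ℓ + 1) → (Fin n → Bool)),
      StrictMono X ∧ altCount f X = k} := by
  refine ⟨0, 0, fun _ => (fun _ => false), ?_, by simp [altCount]⟩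
  intro a b h
  exact absurd h (by omega)

lemma altFrom_le_alt (x : Fin n → Bool) : altFrom f x ≤ alt f := by
  apply csSup_le_csSup (bddAbove_alt f) (nonempty_from f x)
  rintro m ⟨ℓ, X, hX, -, hc⟩
  exact ⟨ℓ, X, hX, hc⟩

lemma altCount_castSucc {ℓ : ℕ} (X : Fin (ℓ + 1 + 1) → (Fin n → Bool)) :
    altCount f X = altCount f (fun i : Fin (ℓ + 1) => X i.castSucc)
      + (if f (X (Fin.last ℓ).castSucc) = f (X (Fin.last (ℓ + 1))) then 0 else 1) := by
  rw [altCount_eq_sum, altCount_eq_sum, Fin.sum_univ_castSucc]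
  simp only [Fin.succ_castSucc, Fin.succ_last]

lemma altCount_snoc {ℓ : ℕ} (X : Fin (ℓ + 1) → (Fin n → Bool)) (y : Fin n → Bool) :
    altCount f (Fin.snoc X y : Fin (ℓ + 1 + 1) → (Fin n → Bool))
      = altCount f X + (if f (X (Fin.last ℓ)) = f y then 0 else 1) := by
  rw [altCount_castSucc]
  have h1 : (fun i : Fin (ℓ + 1) => (Fin.snoc X y : Fin (ℓ + 1 + 1) → (Fin n → Bool)) i.castSucc)
      = X := by
    funext i; rw [Fin.snoc_castSucc]
  rw [h1, Fin.snoc_castSucc, Fin.snoc_last]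

lemma altCount_cons {ℓ : ℕ} (X : Fin (ℓ + 1) → (Fin n → Bool)) (y : Fin n → Bool) :
    altCount f (Fin.cons y X : Fin (ℓ + 1 + 1) → (Fin n → Bool))
      = (if f y = f (X 0) then 0 else 1) + altCount f X := by
  rw [altCount_eq_sum, altCount_eq_sum, Fin.sum_univ_succ]
  have h0 : (Fin.cons y X : Fin (ℓ + 1 + 1) → (Fin n → Bool)) (Fin.castSucc 0) = y := by
    rw [Fin.castSucc_zero, Fin.cons_zero]
  have h1 : (Fin.cons y X : Fin (ℓ + 1 + 1) → (Fin n → Bool)) ((0 : Fin (ℓ + 1)).succ) = X 0 :=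
    Fin.cons_succ _ _ _
  rw [h0, h1]
  simp only [← Fin.succ_castSucc, Fin.cons_succ]

lemma strictMono_snoc {ℓ : ℕ} (X : Fin (ℓ + 1) → (Fin n → Bool)) (hX : StrictMono X)
    (y : Fin n → Bool) (hy : X (Fin.last ℓ) < y) :
    StrictMono (Fin.snoc X y : Fin (ℓ + 1 + 1) → (Fin n → Bool)) := by
  rw [Fin.strictMono_iff_lt_succ]
  intro i
  refine Fin.lastCases ?_ ?_ i
  · rw [Fin.succ_last, Fin.snoc_last, Fin.snoc_castSucc]
    exact hy
  · intro j
    rw [Fin.succ_castSucc, Fin.snoc_castSucc, Fin.snoc_castSucc]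
    exact hX (Fin.castSucc_lt_succ : j.castSucc < j.succ)

lemma strictMono_cons {ℓ : ℕ} (X : Fin (ℓ + 1) → (Fin n → Bool)) (hX : StrictMono X)
    (y : Fin n → Bool) (hy : y < X 0) :
    StrictMono (Fin.cons y X : Fin (ℓ + 1 + 1) → (Fin n → Bool)) := by
  rw [Fin.strictMono_iff_lt_succ]
  intro i
  refine Fin.cases ?_ ?_ i
  · rw [Fin.castSucc_zero, Fin.cons_zero, Fin.cons_succ]
    exact hy
  · intro j
    rw [← Fin.succ_castSucc, Fin.cons_succ, Fin.cons_succ]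
    exact hX (Fin.castSucc_lt_succ : j.castSucc < j.succ)

lemma altCount_parity {ℓ : ℕ} : ∀ X : Fin (ℓ + 1) → (Fin n → Bool),
    altCount f X % 2 = if f (X 0) = f (X (Fin.last ℓ)) then 0 else 1 := by
  induction ℓ with
  | zero =>
    intro X
    simp [altCount, Fin.last]
  | succ ℓ ih =>
    intro X
    rw [altCount_castSucc, Nat.add_mod, ih]
    cases hb0 : f (X 0) <;> cases hb1 : f (X (Fin.last ℓ).castSucc) <;>
      cases hb2 : f (X (Fin.last (ℓ + 1))) <;>
      simp [hb0, hb1, hb2, Fin.castSucc_zero]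

lemma altFrom_parity (x : Fin n → Bool) :
    altFrom f x % 2 = if f x = f (fun _ => true) then 0 else 1 := by
  obtain ⟨ℓ, X, hX, hX0, hc⟩ :
      altFrom f x ∈ {k | ∃ (ℓ : ℕ) (X : Fin (ℓ + 1) → (Fin n → Bool)),
        StrictMono X ∧ X 0 = x ∧ altCount f X = k} :=
    Nat.sSup_mem (nonempty_from f x) (bddAbove_from f x)
  by_cases htop : f (X (Fin.last ℓ)) = f (fun _ => true)
  · rw [show altFrom f x = altCount f X from hc.symm, altCount_parity f X, hX0, htop]
  · exfalso
    have hne : X (Fin.last ℓ) ≠ (fun _ => true) := fun h => htop (by rw [h])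
    have hlt : X (Fin.last ℓ) < (fun _ => true) :=
      lt_of_le_of_ne (fun i => Bool.le_true _) hne
    have hsm := strictMono_snoc X hX _ hlt
    have hzero : (Fin.snoc X (fun _ => true) : Fin (ℓ + 1 + 1) → (Fin n → Bool)) 0 = x := by
      rw [show (0 : Fin (ℓ + 1 + 1)) = (0 : Fin (ℓ + 1)).castSucc from rfl, Fin.snoc_castSucc, hX0]
    have hcount : altCount f (Fin.snoc X (fun _ => true) : Fin (ℓ + 1 + 1) → (Fin n → Bool))
        = altFrom f x + 1 := by
      rw [altCount_snoc, hc, if_neg htop]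
    have hmem : altFrom f x + 1 ∈ {k | ∃ (ℓ : ℕ) (X : Fin (ℓ + 1) → (Fin n → Bool)),
        StrictMono X ∧ X 0 = x ∧ altCount f X = k} :=
      ⟨ℓ + 1, Fin.snoc X (fun _ => true), hsm, hzero, hcount⟩
    have h2 : altFrom f x + 1 ≤ altFrom f x := le_csSup (bddAbove_from f x) hmem
    omega

lemma alt_eq_altFrom_zero : alt f = altFrom f (fun _ => false) := by
  apply le_antisymm
  · obtain ⟨ℓ, X, hX, hc⟩ :
        alt f ∈ {k | ∃ (ℓ : ℕ) (X : Fin (ℓ + 1) → (Fin n → Bool)),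
          StrictMono X ∧ altCount f X = k} :=
      Nat.sSup_mem (nonempty_alt f) (bddAbove_alt f)
    by_cases h0 : X 0 = (fun _ => false)
    · have h1 : altCount f X ≤ altFrom f (fun _ => false) :=
        le_csSup (bddAbove_from f _) ⟨ℓ, X, hX, h0, rfl⟩
      omega
    · have hlt : (fun _ => false : Fin n → Bool) < X 0 :=
        lt_of_le_of_ne (fun i => Bool.false_le _) (fun h => h0 h.symm)
      have hsm := strictMono_cons X hX _ hlt
      have hmem : altCount f (Fin.cons (fun _ => false) X : Fin (ℓ + 1 + 1) → (Fin n → Bool))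
          ∈ {k | ∃ (ℓ : ℕ) (X : Fin (ℓ + 1) → (Fin n → Bool)),
          StrictMono X ∧ X 0 = (fun _ => false) ∧ altCount f X = k} :=
        ⟨ℓ + 1, Fin.cons (fun _ => false) X, hsm, Fin.cons_zero _ _, rfl⟩
      have h3 := altCount_cons f X (fun _ => false)
      have h1' : altCount f (Fin.cons (fun _ => false) X : Fin (ℓ + 1 + 1) → (Fin n → Bool))
          ≤ altFrom f (fun _ => false) := le_csSup (bddAbove_from f _) hmem
      omega
  · exact altFrom_le_alt f _

end Aux

theorem stmt0 {n : ℕ} (f : (Fin n → Bool) → Bool) (k : ℕ) (hk : k = alt f)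
    (x : Fin n → Bool) :
    f x = xor (f (fun _ => false))
      (decide (Odd ((Finset.range k).filter (fun ℓ => altFrom f x ≤ ℓ)).card)) := by
  set m := altFrom f x with hm
  have hmk : m ≤ k := by rw [hk]; exact altFrom_le_alt f x
  have hcard : ((Finset.range k).filter (fun ℓ => m ≤ ℓ)).card = k - m := by
    have : (Finset.range k).filter (fun ℓ => m ≤ ℓ) = Finset.Ico m k := by
      ext a
      simp only [Finset.mem_filter, Finset.mem_range, Finset.mem_Ico]
      omega
    rw [this, Nat.card_Ico]
  rw [hcard]
  have hmp : m % 2 = if f x = f (fun _ => true) then 0 else 1 := altFrom_parity f x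
  have hkp : k % 2 = if f (fun _ => false) = f (fun _ => true) then 0 else 1 := by
    rw [hk, alt_eq_altFrom_zero]
    exact altFrom_parity f _
  cases c1 : f x <;> cases c0 : f (fun _ : Fin n => false) <;>
    cases c2 : f (fun _ : Fin n => true) <;>
    simp [c1, c0, c2, Nat.odd_iff] at hmp hkp ⊢ <;> omega
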